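/- arXiv:2006.12364 — 2 statements merged into one kernel-verified Lean document; each statement's English description precedes it below -/
import Mathlib

section
/- The Kelvin transformation preserves α-Riesz energy: for a positive measure ν with ν({y}) = 0 and its Kelvin transform ν* = K_y ν, one has ∬ |x − z|^{α−n} d(ν* ⊗ ν*)(x,z) = ∬ |x − z|^{α−n} d(ν ⊗ ν)(x,z). -/
open MeasureTheory Set ENNReal

/-- The inversion with respect to the unit sphere centered at `y`. -/
noncomputable def inversion (n : ℕ) (y x : EuclideanSpace ℝ (Fin n)) :
    EuclideanSpace ℝ (Fin n) :=
  y + (‖x - y‖ ^ 2)⁻¹ • (x - y)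

/-- The Kelvin transform `K_y μ`. -/
noncomputable def kelvin (n : ℕ) (α : ℝ) (y : EuclideanSpace ℝ (Fin n))
    (μ : Measure (EuclideanSpace ℝ (Fin n))) : Measure (EuclideanSpace ℝ (Fin n)) :=
  Measure.map (inversion n y)
    (μ.withDensity fun x => ENNReal.ofReal (‖x - y‖ ^ (α - (n : ℝ))))

/-- The α-Riesz energy of a measure. -/
noncomputable def rieszEnergy (n : ℕ) (α : ℝ)
    (μ : Measure (EuclideanSpace ℝ (Fin n))) : ℝ≥0∞ :=
  ∫⁻ p : EuclideanSpace ℝ (Fin n) × EuclideanSpace ℝ (Fin n),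
    ENNReal.ofReal (‖p.1 - p.2‖ ^ (α - (n : ℝ))) ∂(μ.prod μ)

lemma inversion_eq_inversion (n : ℕ) (y : EuclideanSpace ℝ (Fin n)) :
    inversion n y = EuclideanGeometry.inversion y 1 := by
  funext x
  simp only [inversion, EuclideanGeometry.inversion, vadd_eq_add, vsub_eq_sub,
    dist_eq_norm, div_pow, one_pow, one_div, inv_pow]
  rw [add_comm]

lemma norm_inversion_sub_inversion (n : ℕ) {y x z : EuclideanSpace ℝ (Fin n)}
    (hx : x ≠ y) (hz : z ≠ y) :
    ‖inversion n y x - inversion n y z‖ = ‖x - z‖ / (‖x - y‖ * ‖z - y‖) := by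
  rw [inversion_eq_inversion, ← dist_eq_norm]
  rw [EuclideanGeometry.dist_inversion_inversion hx hz 1]
  simp only [dist_eq_norm, one_pow, div_mul_eq_mul_div, one_mul]

set_option maxHeartbeats 1000000 in
theorem stmt5 (n : ℕ) (hn : 3 ≤ n) (α : ℝ) (hα : 0 < α) (hα2 : α ≤ 2)
    (y : EuclideanSpace ℝ (Fin n)) (ν : Measure (EuclideanSpace ℝ (Fin n)))
    [IsLocallyFiniteMeasure ν] (hνy : ν {y} = 0) :
    rieszEnergy n α (kelvin n α y ν) = rieszEnergy n α ν := by
  have hJm : Measurable (inversion n y) := by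
    have : inversion n y = fun x => y + (‖x - y‖ ^ 2)⁻¹ • (x - y) := rfl
    rw [this]; fun_prop
  have hkm : Measurable (fun p : EuclideanSpace ℝ (Fin n) × EuclideanSpace ℝ (Fin n) =>
      ENNReal.ofReal (‖p.1 - p.2‖ ^ (α - (n : ℝ)))) := by fun_prop
  have hwm : Measurable (fun x : EuclideanSpace ℝ (Fin n) =>
      ENNReal.ofReal (‖x - y‖ ^ (α - (n : ℝ)))) := by fun_prop
  have key : ∀ x z : EuclideanSpace ℝ (Fin n), x ≠ y → z ≠ y →
      ENNReal.ofReal (‖x - y‖ ^ (α - (n : ℝ))) *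
        (ENNReal.ofReal (‖z - y‖ ^ (α - (n : ℝ))) *
          ENNReal.ofReal (‖inversion n y x - inversion n y z‖ ^ (α - (n : ℝ)))) =
      ENNReal.ofReal (‖x - z‖ ^ (α - (n : ℝ))) := by
    intro x z hx hz
    have ha : (0:ℝ) < ‖x - y‖ := by simpa [sub_eq_zero] using hx
    have hb : (0:ℝ) < ‖z - y‖ := by simpa [sub_eq_zero] using hz
    rw [norm_inversion_sub_inversion n hx hz]
    rw [← ENNReal.ofReal_mul (Real.rpow_nonneg (norm_nonneg _) _),
      ← ENNReal.ofReal_mul (Real.rpow_nonneg (norm_nonneg _) _)]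
    congr 1
    rw [Real.div_rpow (norm_nonneg _) (mul_nonneg ha.le hb.le),
      Real.mul_rpow ha.le hb.le]
    have ha' : ‖x - y‖ ^ (α - (n : ℝ)) ≠ 0 := (Real.rpow_pos_of_pos ha _).ne'
    have hb' : ‖z - y‖ ^ (α - (n : ℝ)) ≠ 0 := (Real.rpow_pos_of_pos hb _).ne'
    field_simp
  haveI : SigmaFinite ν := inferInstance
  have hae : ∀ᵐ x ∂ν, x ≠ y := by
    rw [ae_iff]
    simpa [not_not] using hνy
  rw [rieszEnergy, rieszEnergy, kelvin]
  rw [Measure.map_prod_map _ _ hJm hJm, lintegral_map hkm (hJm.prodMap hJm)]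
  simp only [Prod.map_fst, Prod.map_snd]
  have hkm' : Measurable (fun p : EuclideanSpace ℝ (Fin n) × EuclideanSpace ℝ (Fin n) =>
      ENNReal.ofReal (‖inversion n y p.1 - inversion n y p.2‖ ^ (α - (n : ℝ)))) := by fun_prop
  rw [lintegral_prod _ hkm'.aemeasurable, lintegral_prod _ hkm.aemeasurable]
  have inner_eq : ∀ x, (∫⁻ z, ENNReal.ofReal (‖inversion n y x - inversion n y z‖ ^ (α - (n : ℝ)))
        ∂(ν.withDensity fun x => ENNReal.ofReal (‖x - y‖ ^ (α - (n : ℝ)))))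
      = ∫⁻ z, ENNReal.ofReal (‖z - y‖ ^ (α - (n : ℝ))) *
          ENNReal.ofReal (‖inversion n y x - inversion n y z‖ ^ (α - (n : ℝ))) ∂ν := by
    intro x
    rw [lintegral_withDensity_eq_lintegral_mul ν hwm (by fun_prop)]
    rfl
  simp only [inner_eq]
  have houter : Measurable (fun x => ∫⁻ z, ENNReal.ofReal (‖z - y‖ ^ (α - (n : ℝ))) *
      ENNReal.ofReal (‖inversion n y x - inversion n y z‖ ^ (α - (n : ℝ))) ∂ν) := by
    apply Measurable.lintegral_prod_right
      (f := fun x z => ENNReal.ofReal (‖z - y‖ ^ (α - (n : ℝ))) *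
        ENNReal.ofReal (‖inversion n y x - inversion n y z‖ ^ (α - (n : ℝ))))
    fun_prop
  rw [lintegral_withDensity_eq_lintegral_mul ν hwm houter]
  refine lintegral_congr_ae ?_
  filter_upwards [hae] with x hx
  simp only [Pi.mul_apply]
  have hmz : Measurable (fun z => ENNReal.ofReal (‖z - y‖ ^ (α - (n : ℝ))) *
      ENNReal.ofReal (‖inversion n y x - inversion n y z‖ ^ (α - (n : ℝ)))) := by fun_prop
  rw [← lintegral_const_mul _ hmz]
  refine lintegral_congr_ae ?_
  filter_upwards [hae] with z hz
  exact key x z hx hz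
end

section
/- Under the inversion with respect to the unit sphere centered at the origin in ℝⁿ, the image measure of Lebesgue measure transforms by dx* = |x|^{−2n} dx; equivalently, for every nonnegative measurable function f, ∫ f(J_0(x)) |x|^{−2n} dx = ∫ f(x*) dx*. -/
open MeasureTheory Set ENNReal

/-- The inversion with respect to the unit sphere centered at the origin. -/
noncomputable def inversion0 (n : ℕ) (x : EuclideanSpace ℝ (Fin n)) :
    EuclideanSpace ℝ (Fin n) :=
  (‖x‖ ^ 2)⁻¹ • x

namespace InvAux

variable {n : ℕ}

/-- The derivative of the inversion at `x`. -/
noncomputable def D (x : EuclideanSpace ℝ (Fin n)) :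
    EuclideanSpace ℝ (Fin n) →L[ℝ] EuclideanSpace ℝ (Fin n) :=
  (‖x‖ ^ 2)⁻¹ • ContinuousLinearMap.id ℝ _ +
    ((-((‖x‖ ^ 2) ^ 2)⁻¹ • (2 • innerSL ℝ x)).smulRight x)

lemma norm_sq_ne_zero {x : EuclideanSpace ℝ (Fin n)} (hx : x ≠ 0) : ‖x‖ ^ 2 ≠ 0 :=
  pow_ne_zero _ (norm_ne_zero_iff.2 hx)

lemma hasFDerivAt_inversion0 {x : EuclideanSpace ℝ (Fin n)} (hx : x ≠ 0) :
    HasFDerivAt (inversion0 n) (D x) x := by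
  have hg : HasFDerivAt (fun y : EuclideanSpace ℝ (Fin n) => ‖y‖ ^ 2) (2 • innerSL ℝ x) x :=
    (hasStrictFDerivAt_norm_sq x).hasFDerivAt
  have hinv : HasDerivAt (fun t : ℝ => t⁻¹) (-((‖x‖ ^ 2) ^ 2)⁻¹) (‖x‖ ^ 2) :=
    hasDerivAt_inv (norm_sq_ne_zero hx)
  have hc : HasFDerivAt (fun y : EuclideanSpace ℝ (Fin n) => (‖y‖ ^ 2)⁻¹)
      (-((‖x‖ ^ 2) ^ 2)⁻¹ • (2 • innerSL ℝ x)) x := hinv.comp_hasFDerivAt x hg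
  have h := hc.smul (hasFDerivAt_id x)
  exact h

lemma toMatrix_D {x : EuclideanSpace ℝ (Fin n)} :
    LinearMap.toMatrix (EuclideanSpace.basisFun (Fin n) ℝ).toBasis
        (EuclideanSpace.basisFun (Fin n) ℝ).toBasis (D x : _ →ₗ[ℝ] _) =
      (‖x‖ ^ 2)⁻¹ •
        (1 + Matrix.replicateCol Unit (fun i => (-2 * (‖x‖ ^ 2)⁻¹) * x i) *
          Matrix.replicateRow Unit (fun j => x j)) := by
  ext i j
  simp only [LinearMap.toMatrix_apply, D, ContinuousLinearMap.coe_coe,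
    ContinuousLinearMap.add_apply, ContinuousLinearMap.smul_apply,
    ContinuousLinearMap.coe_id', id_eq, ContinuousLinearMap.smulRight_apply,
    ContinuousLinearMap.neg_apply, ContinuousLinearMap.coe_smul',
    Pi.smul_apply, innerSL_apply_apply]
  rw [OrthonormalBasis.coe_toBasis_repr_apply, OrthonormalBasis.coe_toBasis]
  simp only [EuclideanSpace.basisFun_apply]
  have h1 : (inner ℝ x (EuclideanSpace.single j (1:ℝ)) : ℝ) = x j := by
    rw [real_inner_comm, EuclideanSpace.inner_single_left]
    simp
  simp only [Matrix.smul_apply, Matrix.add_apply, Matrix.mul_apply, Matrix.replicateCol_apply,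
    Matrix.replicateRow_apply, Finset.univ_unique, Finset.sum_singleton, Matrix.one_apply]
  rw [h1]
  by_cases hij : i = j <;>
    simp [hij, EuclideanSpace.single_apply, smul_eq_mul] <;> ring

lemma norm_sq_eq_sum (x : EuclideanSpace ℝ (Fin n)) : ∑ i, x i * x i = ‖x‖ ^ 2 := by
  rw [← real_inner_self_eq_norm_sq, PiLp.inner_apply]
  simp [RCLike.inner_apply]
  simp only [sq]

lemma det_D {x : EuclideanSpace ℝ (Fin n)} (hx : x ≠ 0) :
    (D x).det = -(((‖x‖ ^ 2)⁻¹) ^ n) := by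
  have hb := LinearMap.det_toMatrix (EuclideanSpace.basisFun (Fin n) ℝ).toBasis
    (D x : _ →ₗ[ℝ] _)
  rw [ContinuousLinearMap.det, ← hb, toMatrix_D, Matrix.det_smul,
    Matrix.det_one_add_replicateCol_mul_replicateRow]
  have hdot : dotProduct (fun j => x j) (fun i => (-2 * (‖x‖ ^ 2)⁻¹) * x i) = -2 := by
    simp only [dotProduct]
    have : ∑ i, x i * (-2 * (‖x‖ ^ 2)⁻¹ * x i) =
        (-2 * (‖x‖ ^ 2)⁻¹) * ∑ i, x i * x i := by
      rw [Finset.mul_sum]; congr 1; ext i; ring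
    rw [this, norm_sq_eq_sum, mul_assoc, inv_mul_cancel₀ (norm_sq_ne_zero hx), mul_one]
  rw [hdot]
  simp only [Fintype.card_fin]
  ring

lemma inversion0_ne_zero {x : EuclideanSpace ℝ (Fin n)} (hx : x ≠ 0) :
    inversion0 n x ≠ 0 :=
  smul_ne_zero (inv_ne_zero (norm_sq_ne_zero hx)) hx

lemma inversion0_involutive {x : EuclideanSpace ℝ (Fin n)} (hx : x ≠ 0) :
    inversion0 n (inversion0 n x) = x := by
  have hn : ‖x‖ ≠ 0 := norm_ne_zero_iff.2 hx
  have h1 : ‖inversion0 n x‖ ^ 2 = ((‖x‖ ^ 2)⁻¹) ^ 2 * ‖x‖ ^ 2 := by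
    rw [inversion0, norm_smul, mul_pow]
    congr 1
    rw [Real.norm_eq_abs, abs_inv, abs_of_nonneg (by positivity : (0:ℝ) ≤ ‖x‖ ^ 2)]
  rw [inversion0, h1, inversion0, smul_smul]
  have : (((‖x‖ ^ 2)⁻¹) ^ 2 * ‖x‖ ^ 2)⁻¹ * (‖x‖ ^ 2)⁻¹ = 1 := by
    field_simp
  rw [this, one_smul]

lemma injOn_inversion0 : InjOn (inversion0 n) {0}ᶜ := by
  intro x hx y hy h
  have := congrArg (inversion0 n) h
  rwa [inversion0_involutive hx, inversion0_involutive hy] at this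

lemma image_inversion0 : inversion0 n '' {0}ᶜ = ({0}ᶜ : Set (EuclideanSpace ℝ (Fin n))) := by
  apply Subset.antisymm
  · rintro _ ⟨x, hx, rfl⟩
    exact inversion0_ne_zero hx
  · intro y hy
    exact ⟨inversion0 n y, inversion0_ne_zero hy, inversion0_involutive hy⟩

end InvAux

theorem stmt6 (n : ℕ) (hn : 1 ≤ n)
    (f : EuclideanSpace ℝ (Fin n) → ℝ≥0∞) (hf : Measurable f) :
    ∫⁻ x in ({0}ᶜ : Set (EuclideanSpace ℝ (Fin n))),
        f (inversion0 n x) * ENNReal.ofReal (‖x‖ ^ (-(2 * (n : ℝ)))) ∂volume =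
      ∫⁻ x in ({0}ᶜ : Set (EuclideanSpace ℝ (Fin n))), f x ∂volume := by
  have hs : MeasurableSet ({0}ᶜ : Set (EuclideanSpace ℝ (Fin n))) :=
    (measurableSet_singleton 0).compl
  have hder : ∀ x ∈ ({0}ᶜ : Set (EuclideanSpace ℝ (Fin n))),
      HasFDerivWithinAt (inversion0 n) (InvAux.D x) {0}ᶜ x := fun x hx =>
    (InvAux.hasFDerivAt_inversion0 hx).hasFDerivWithinAt
  have key := lintegral_image_eq_lintegral_abs_det_fderiv_mul volume hs hder
    InvAux.injOn_inversion0 f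
  rw [InvAux.image_inversion0] at key
  rw [key]
  apply setLIntegral_congr_fun hs
  intro x hx
  have hnx : ‖x‖ ≠ 0 := norm_ne_zero_iff.2 hx
  have hdet : |(InvAux.D x).det| = ((‖x‖ ^ 2)⁻¹) ^ n := by
    rw [InvAux.det_D hx, abs_neg, abs_pow, abs_inv,
      abs_of_nonneg (by positivity : (0:ℝ) ≤ ‖x‖ ^ 2)]
  have hpow : ‖x‖ ^ (-(2 * (n : ℝ))) = ((‖x‖ ^ 2)⁻¹) ^ n := by
    rw [Real.rpow_neg (norm_nonneg x)]
    rw [show (2 * (n : ℝ)) = ((2 * n : ℕ) : ℝ) by push_cast; ring,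
      Real.rpow_natCast, pow_mul, inv_pow]
  dsimp only
  rw [hpow, ← hdet, mul_comm]
end
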